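/- The equation z⁸ - 4z⁶ - 4z⁴ + 4z² + 6 + 4z⁻² - 4z⁻⁴ - 4z⁻⁶ + z⁻⁸ = 0 has at least one complex solution z with |z| > 1. -/

import Mathlib

/-- The characteristic equation of the d = 3 holonomy-regularized quantum constraint,
z⁸ − 4z⁶ − 4z⁴ + 4z² + 6 + 4z⁻² − 4z⁻⁴ − 4z⁻⁶ + z⁻⁸ = 0,
has a complex solution with modulus greater than one. -/
theorem exists_unstable_root :
    ∃ z : ℂ, z ≠ 0 ∧
      z ^ 8 - 4 * z ^ 6 - 4 * z ^ 4 + 4 * z ^ 2 + 6 + 4 * z⁻¹ ^ 2 - 4 * z⁻¹ ^ 4 -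
          4 * z⁻¹ ^ 6 + z⁻¹ ^ 8 = 0 ∧
        1 < ‖z‖ := by
  set a : ℝ := Real.sqrt 2 with ha_def
  set b : ℝ := Real.sqrt (2 + 2 * a) with hb_def
  have ha : a ^ 2 = 2 := Real.sq_sqrt (by norm_num)
  have ha0 : 0 ≤ a := Real.sqrt_nonneg _
  have hb : b ^ 2 = 2 + 2 * a := Real.sq_sqrt (by nlinarith)
  have hb0 : 0 ≤ b := Real.sqrt_nonneg _
  set t : ℝ := 1 + a + b with ht_def
  have ht1 : 1 < t := by
    have : 1 ≤ a := by nlinarith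
    nlinarith
  have ht0 : 0 ≤ t := by linarith
  have hquad : t ^ 2 - (2 + 2 * a) * t + 1 = 0 := by
    rw [ht_def]; linear_combination hb - ha
  have hquart : t ^ 4 - 4 * t ^ 3 - 2 * t ^ 2 - 4 * t + 1 = 0 := by
    linear_combination (t ^ 2 - (2 - 2 * a) * t + 1) * hquad + 4 * t ^ 2 * ha
  have htne : (t : ℂ) ≠ 0 := by
    simp only [ne_eq, Complex.ofReal_eq_zero]; positivity
  refine ⟨(Real.sqrt t : ℂ), ?_, ?_, ?_⟩
  · simp only [ne_eq, Complex.ofReal_eq_zero]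
    positivity
  · have hz2 : ((Real.sqrt t : ℝ) : ℂ) ^ 2 = (t : ℂ) := by
      rw [← Complex.ofReal_pow, Real.sq_sqrt ht0]
    have hq : ((t : ℂ)) ^ 4 - 4 * (t : ℂ) ^ 3 - 2 * (t : ℂ) ^ 2 - 4 * (t : ℂ) + 1 = 0 := by
      exact_mod_cast congrArg (Complex.ofReal) hquart
    have h8 : ((Real.sqrt t : ℝ) : ℂ) ^ 8 = (t : ℂ) ^ 4 := by
      rw [show (8 : ℕ) = 2 * 4 from rfl, pow_mul, hz2]
    have h6 : ((Real.sqrt t : ℝ) : ℂ) ^ 6 = (t : ℂ) ^ 3 := by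
      rw [show (6 : ℕ) = 2 * 3 from rfl, pow_mul, hz2]
    have h4 : ((Real.sqrt t : ℝ) : ℂ) ^ 4 = (t : ℂ) ^ 2 := by
      rw [show (4 : ℕ) = 2 * 2 from rfl, pow_mul, hz2]
    rw [inv_pow, inv_pow, inv_pow, inv_pow, h8, h6, h4, hz2]
    field_simp
    linear_combination ((t : ℂ) ^ 4 - 2 * (t : ℂ) ^ 2 + 1) * hq
  · rw [Complex.norm_real, Real.norm_of_nonneg (Real.sqrt_nonneg _)]
    exact (Real.lt_sqrt (by norm_num)).mpr (by nlinarith)
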